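/- arXiv:2410.12644 — 4 statements merged into one kernel-verified Lean document; each statement's English description precedes it below -/
import Mathlib

section
/- Let Ω ∈ 𝒟ʳ be a Radon domain with affine arc-length parametrization γ_Ω. Then there exists s̄ ∈ 𝕋 such that the 4-periodic symplectic billiard orbit passing through γ_Ω(s̄) has parameters {s̄, s̄ + 1/4, s̄ + 1/2, s̄ + 3/4}, i.e. the four points γ_Ω(s̄), γ_Ω(s̄+1/4), γ_Ω(s̄+1/2), γ_Ω(s̄+3/4) form a 4-periodic closed trajectory of the symplectic billiard. -/
noncomputable section

open Real Set MeasureTheory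

/-- The Euclidean plane. -/
abbrev Plane : Type := EuclideanSpace ℝ (Fin 2)

/-- The point of the plane with coordinates `(a, b)`. -/
def pt (a b : ℝ) : Plane := (WithLp.equiv 2 (Fin 2 → ℝ)).symm ![a, b]

/-- The determinant of two planar vectors. -/
def det2 (v w : Plane) : ℝ := v 0 * w 1 - v 1 * w 0

/-- A strictly convex planar domain in `𝒟ʳ`: `C^{r+1}` boundary with everywhere positive
curvature, counterclockwise oriented, normalized to unit affine perimeter, and described by
its affine arc-length parametrization `γ` (1-periodic, `C^r`, `det (γ', γ'') = 1`). -/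
structure AffDomain (r : ℕ) where
  γ : ℝ → Plane
  periodic : Function.Periodic γ 1
  smooth : ContDiff ℝ r γ
  affine : ∀ s : ℝ, det2 (deriv γ s) (iteratedDeriv 2 γ s) = 1
  inj : Set.InjOn γ (Set.Ico (0:ℝ) 1)

/-- A closed trajectory of the symplectic billiard: a cyclic sequence of `q` boundary points
(given by parameters) such that `x_{j+1} - x_{j-1}` is parallel to the tangent at `x_j`. -/
def IsClosedTraj (γ : ℝ → Plane) (q : ℕ) (s : ℤ → ℝ) : Prop :=
  (∀ j : ℤ, s (j + q) = s j) ∧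
    ∀ j : ℤ, det2 (γ (s (j + 1)) - γ (s (j - 1))) (deriv γ (s j)) = 0

/-- The action `Σ_j det (x_j, x_{j+1})` of a cyclic configuration of `q` points. -/
def bAction (γ : ℝ → Plane) (q : ℕ) (s : ℤ → ℝ) : ℝ :=
  ∑ j ∈ Finset.range q, det2 (γ (s j)) (γ (s (j + 1)))

/-- The area of the domain. -/
def domArea {r : ℕ} (Ω : AffDomain r) : ℝ :=
  (1 / 2) * ∫ u in (0:ℝ)..1, det2 (Ω.γ u) (deriv Ω.γ u)

/-- The area spectrum `𝒜(Ω) = ℕ·{actions of closed trajectories} ∪ ℕ·{A_Ω}`. -/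
def areaSpectrum {r : ℕ} (Ω : AffDomain r) : Set ℝ :=
  {a : ℝ | ∃ n : ℕ, 0 < n ∧ ∃ q : ℕ, 2 ≤ q ∧ ∃ s : ℤ → ℝ,
      IsClosedTraj Ω.γ q s ∧ a = n * bAction Ω.γ q s} ∪
  {a : ℝ | ∃ n : ℕ, 0 < n ∧ a = n * domArea Ω}

/-- Affine arc-length parametrization of the circle of affine perimeter 1 with center `c`
and phase `φ` (its Euclidean radius is `(2π)^{-3/2}`). -/
def circleParam (c : Plane) (φ : ℝ) : ℝ → Plane :=
  fun u => c + ((2 * π) ^ (-(3:ℝ)/2)) •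
    pt (Real.cos (2 * π * u + φ)) (Real.sin (2 * π * u + φ))

/-- The distance `d(Ω₀, Ω₁) = Σ_{k=0}^{r} sup_{s ∈ [0,1]} ‖γ₁^{(k)}(s) - γ₀^{(k)}(s)‖`. -/
def domDist (r : ℕ) (γ₀ γ₁ : ℝ → Plane) : ℝ :=
  ∑ k ∈ Finset.range (r + 1),
    ⨆ u : Set.Icc (0:ℝ) 1, ‖iteratedDeriv k γ₁ (u : ℝ) - iteratedDeriv k γ₀ (u : ℝ)‖

/-- `Ω` is `δ`-close to the circle: `d(Ω, D) ≤ δ` where `D` is the disk of affine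
perimeter 1 tangent to `Ω` at `γ_Ω(0)`. -/
def CloseToCircle (r : ℕ) (δ : ℝ) (Ω : AffDomain r) : Prop :=
  ∃ c : Plane, ∃ φ : ℝ,
    circleParam c φ 0 = Ω.γ 0 ∧
    (∃ t : ℝ, 0 < t ∧ deriv (circleParam c φ) 0 = t • deriv Ω.γ 0) ∧
    domDist r Ω.γ (circleParam c φ) ≤ δ

/-- Reflection across the line through `p` with direction `v`. -/
def lineReflect (p v x : Plane) : Plane :=
  p + ((2 * (inner ℝ (x - p) v : ℝ) / (inner ℝ v v : ℝ)) • v - (x - p))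

/-- `Ω` is axially symmetric: invariant under the reflection in some line. -/
def IsAxiallySymmetric {r : ℕ} (Ω : AffDomain r) : Prop :=
  ∃ p v : Plane, v ≠ 0 ∧ lineReflect p v '' Set.range Ω.γ = Set.range Ω.γ

/-- `Ω` is centrally symmetric: invariant under the point reflection in some point. -/
def IsCentrallySymmetric {r : ℕ} (Ω : AffDomain r) : Prop :=
  ∃ c : Plane, (fun x => (2:ℝ) • c - x) '' Set.range Ω.γ = Set.range Ω.γ

/-- A `q`-periodic symplectic billiard orbit of rotation number `1/q` (in lifted
parameters: strictly increasing, jumping by `1` after `q` steps). -/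
def IsPeriodicOrbit (γ : ℝ → Plane) (q : ℕ) (s : ℤ → ℝ) : Prop :=
  StrictMono s ∧ (∀ j : ℤ, s (j + q) = s j + 1) ∧
    ∀ j : ℤ, det2 (γ (s (j + 1)) - γ (s (j - 1))) (deriv γ (s j)) = 0

/-- Even-rational integrability: for every even `q ≥ 4` there is a non-contractible
invariant curve consisting of `q`-periodic points (a continuous family of `q`-periodic
orbits through every boundary point). -/
def EvenRatIntegrable {r : ℕ} (Ω : AffDomain r) : Prop :=
  ∀ q : ℕ, 4 ≤ q → Even q →
    ∃ σ : ℝ → ℤ → ℝ, (∀ j : ℤ, Continuous fun t => σ t j) ∧ (∀ t : ℝ, σ t 0 = t) ∧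
      (∀ t : ℝ, ∀ j : ℤ, σ (t + 1) j = σ t j + 1) ∧ ∀ t : ℝ, IsPeriodicOrbit Ω.γ q (σ t)

/-- A `C¹` parametric family `(Ω_τ)_{|τ|≤1}`: `τ ↦ γ(τ,s)` is `C¹` on `[-1,1]` for each `s`. -/
def IsC1Family {r : ℕ} (F : ℝ → AffDomain r) : Prop :=
  ∀ u : ℝ, ContDiffOn ℝ 1 (fun τ => (F τ).γ u) (Set.Icc (-1:ℝ) 1)

/-- Area-isospectral family: `𝒜(Ω_τ) = 𝒜(Ω_{τ'})` for all `τ, τ' ∈ [-1,1]`. -/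
def AreaIsospectral {r : ℕ} (F : ℝ → AffDomain r) : Prop :=
  ∀ τ ∈ Set.Icc (-1:ℝ) 1, ∀ τ' ∈ Set.Icc (-1:ℝ) 1,
    areaSpectrum (F τ) = areaSpectrum (F τ')

/-- The affinity `x ↦ B x + b`. -/
def affMap (B : Matrix (Fin 2) (Fin 2) ℝ) (b : Plane) (x : Plane) : Plane :=
  (WithLp.equiv 2 (Fin 2 → ℝ)).symm (B.mulVec (WithLp.equiv 2 (Fin 2 → ℝ) x)) + b

/-- Equi-affine family: `Ω_τ = B_τ Ω₀ + b_τ` with `B_τ ∈ SL(2,ℝ)`. -/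
def IsEquiAffine {r : ℕ} (F : ℝ → AffDomain r) : Prop :=
  ∃ B : ℝ → Matrix (Fin 2) (Fin 2) ℝ, ∃ b : ℝ → Plane,
    ∀ τ ∈ Set.Icc (-1:ℝ) 1, (B τ).det = 1 ∧
      Set.range (F τ).γ = affMap (B τ) (b τ) '' Set.range (F 0).γ

/-- Reflection across the `x`-axis. -/
def reflX (x : Plane) : Plane := pt (x 0) (-(x 1))

/-- Normalized family of axially symmetric domains: the symmetry axis is the `x`-axis,
the marked point is `γ(τ,0) = (0,0)` and the auxiliary point is `(2(2π)^{-3/2}, 0)`. -/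
def NormalizedAxialFam {r : ℕ} (F : ℝ → AffDomain r) : Prop :=
  ∀ τ ∈ Set.Icc (-1:ℝ) 1,
    (∀ s : ℝ, (F τ).γ (-s) = reflX ((F τ).γ s)) ∧
    (F τ).γ 0 = pt 0 0 ∧
    (F τ).γ (1/2) = pt (2 * (2 * π) ^ (-(3:ℝ)/2)) 0

/-- Normalized family of (centrally symmetric) Radon domains: center of symmetry at the
origin, `γ(τ, s̄_τ) = ((2π)^{-3/2}, 0)`, `γ(τ, s̄_τ + 1/4)` a fixed point on `{y > 0}`,
where `{s̄_τ, s̄_τ + 1/4, s̄_τ + 1/2, s̄_τ + 3/4}` is a 4-periodic orbit. -/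
def NormalizedRadonFam {r : ℕ} (F : ℝ → AffDomain r) : Prop :=
  ∃ sb : ℝ → ℝ, ∃ P : Plane, P 0 = 0 ∧ 0 < P 1 ∧
    ∀ τ ∈ Set.Icc (-1:ℝ) 1,
      (∀ s : ℝ, (F τ).γ (s + 1/2) = -(F τ).γ s) ∧
      (F τ).γ (sb τ) = pt ((2 * π) ^ (-(3:ℝ)/2)) 0 ∧
      (F τ).γ (sb τ + 1/4) = P ∧
      ∀ j : ℤ, det2 ((F τ).γ (sb τ + (j + 1) / 4) - (F τ).γ (sb τ + (j - 1) / 4))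
        (deriv ((F τ).γ) (sb τ + j / 4)) = 0

/-- The infinitesimal deformation function
`n_γ(τ,s) = det (∂_τ γ(τ,s), ∂_s γ(τ,s)/‖∂_s γ(τ,s)‖)` (the `τ`-derivative is taken
within `[-1,1]`). -/
def nFun (γ : ℝ → ℝ → Plane) (τ s : ℝ) : ℝ :=
  det2 (derivWithin (fun t => γ t s) (Set.Icc (-1:ℝ) 1) τ)
    ((‖deriv (γ τ) s‖)⁻¹ • deriv (γ τ) s)

/-- The canonical parametrization of a family of domains. -/
def famγ {r : ℕ} (F : ℝ → AffDomain r) : ℝ → ℝ → Plane := fun τ u => (F τ).γ u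

/-- Axially symmetric `q`-configuration through the marked point:
`0 = s₀ ≤ s₁ ≤ ⋯ ≤ s_{q-1} ≤ 1`, extended by `s_{j+q} = s_j + 1`, with the reflection
symmetry `s_{q-j} = 1 - s_j` (i.e. `s_{q-j} = -s_j` mod 1). -/
def SymCfg (q : ℕ) (s : ℤ → ℝ) : Prop :=
  s 0 = 0 ∧ (∀ j : ℤ, s (j + q) = s j + 1) ∧ (∀ j : ℤ, s j ≤ s (j + 1)) ∧
    ∀ j : ℤ, s (q - j) = 1 - s j

/-- Centrally symmetric `2k`-configuration: `s_{j+2k} = s_j + 1`, monotone, with the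
central symmetry `s_{j+k} = s_j + 1/2`. -/
def CentCfg (k : ℕ) (s : ℤ → ℝ) : Prop :=
  (∀ j : ℤ, s (j + 2 * k) = s j + 1) ∧ (∀ j : ℤ, s j ≤ s (j + 1)) ∧
    ∀ j : ℤ, s (j + k) = s j + 1/2

/-- The four points `γ(a), γ(b), γ(a + 1/2), γ(b + 1/2)` form a 4-periodic closed
trajectory of the symplectic billiard. -/
def IsSquareOrbit (γ : ℝ → Plane) (a b : ℝ) : Prop :=
  det2 (γ b - γ (b - 1/2)) (deriv γ a) = 0 ∧
  det2 (γ (a + 1/2) - γ a) (deriv γ b) = 0 ∧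
  det2 (γ (b + 1/2) - γ b) (deriv γ (a + 1/2)) = 0 ∧
  det2 (γ (a + 1) - γ (a + 1/2)) (deriv γ (b + 1/2)) = 0

/-- A Radon domain: centrally symmetric (centered at the origin) and through every
boundary point there passes a 4-periodic symplectic billiard orbit, with a continuous
next-vertex map `φ` satisfying `s < φ(s) < s + 1/2` and `φ(φ(s)) = s + 1/2`. -/
def IsRadon {r : ℕ} (Ω : AffDomain r) : Prop :=
  (∀ s : ℝ, Ω.γ (s + 1/2) = -Ω.γ s) ∧
  ∃ φ : ℝ → ℝ, Continuous φ ∧ (∀ s : ℝ, s < φ s ∧ φ s < s + 1/2) ∧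
    (∀ s : ℝ, φ (s + 1) = φ s + 1) ∧ (∀ s : ℝ, φ (φ s) = s + 1/2) ∧
    ∀ s : ℝ, IsSquareOrbit Ω.γ s (φ s)

/-- The affine curvature `k = det (γ'', γ''')`. -/
def kAff {r : ℕ} (Ω : AffDomain r) (s : ℝ) : ℝ :=
  det2 (iteratedDeriv 2 Ω.γ s) (iteratedDeriv 3 Ω.γ s)

/-- The `C²` norm `sup_{[0,1]} (|f| + |f'| + |f''|)` of a 1-periodic function. -/
def C2norm (f : ℝ → ℝ) : ℝ :=
  ⨆ u : Set.Icc (0:ℝ) 1, (|f (u : ℝ)| + |deriv f (u : ℝ)| + |iteratedDeriv 2 f (u : ℝ)|)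

/-- The function `β(x) = (1/15)(k(x) - ∫₀¹ k) + (1/3)((2π)² - k(x))`. -/
def betaFn {r : ℕ} (Ω : AffDomain r) (x : ℝ) : ℝ :=
  (1/15) * (kAff Ω x - ∫ u in (0:ℝ)..1, kAff Ω u) +
    (1/3) * ((2 * π) ^ 2 - kAff Ω x)

/-- The `k`-th Fourier coefficient of a 1-periodic function. -/
def fc (f : ℝ → ℝ) (k : ℤ) : ℂ :=
  ∫ u in (0:ℝ)..1, (f u : ℂ) * Complex.exp (-(2 * (π:ℂ) * Complex.I * k * u))

/-- `ζ(t) = Σ_{n ≥ 1} 1/n^t`. -/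
def zetaSum (t : ℕ) : ℝ := ∑' n : ℕ, (1:ℝ) / ((n:ℝ) + 1) ^ t

/-- `Δ_q(τ)`: twice the maximal area (i.e. the maximal action) among axially symmetric
`q`-configurations through the marked point of `Ω_τ`. -/
def Deltaq {r : ℕ} (F : ℝ → AffDomain r) (q : ℕ) (τ : ℝ) : ℝ :=
  sSup {a : ℝ | ∃ s : ℤ → ℝ, SymCfg q s ∧ a = bAction (F τ).γ q s}

/-- **Proposition.** Every Radon domain `Ω ∈ 𝒟ʳ` admits a parameter `s̄` such that the
4-periodic symplectic billiard orbit through `γ_Ω(s̄)` has parameters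
`{s̄, s̄ + 1/4, s̄ + 1/2, s̄ + 3/4}`. -/
theorem radon_exists_square_orbit {r : ℕ} (hr : 2 ≤ r) (Ω : AffDomain r)
    (hΩ : IsRadon Ω) :
    ∃ sb : ℝ, IsSquareOrbit Ω.γ sb (sb + 1/4) := by
  obtain ⟨hc, φ, hφc, hbd, hper, hinv, hsq⟩ := hΩ
  have hg : Continuous fun s => φ s - s := hφc.sub continuous_id
  have hab : (0:ℝ) ≤ φ 0 := le_of_lt (hbd 0).1
  have hsum : (φ 0 - 0) + (φ (φ 0) - φ 0) = 1/2 := by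
    have h := hinv 0; linarith
  have hex : ∃ s, φ s - s = 1/4 := by
    rcases le_total (φ 0 - 0) (1/4) with h | h
    · have h2 : (1:ℝ)/4 ≤ φ (φ 0) - φ 0 := by linarith
      obtain ⟨s, _, hs⟩ := intermediate_value_Icc hab hg.continuousOn ⟨h, h2⟩
      exact ⟨s, hs⟩
    · have h2 : φ (φ 0) - φ 0 ≤ 1/4 := by linarith
      obtain ⟨s, _, hs⟩ := intermediate_value_Icc' hab hg.continuousOn ⟨h2, h⟩
      exact ⟨s, hs⟩
  obtain ⟨s, hs⟩ := hex
  have hφs : φ s = s + 1/4 := by linarith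
  have h4 := hsq s
  rw [hφs] at h4
  exact ⟨s, h4⟩
end
end

section
/- For every integer t ≥ 3 and every integer q ≥ 3, the double sum Σ_{s≥1} Σ_{k≥1, k≠sq} 1/(k^{t−1}·|sq − k|^{t}) is at most (2ζ(t−1)ζ(t)/q^{t−1})·(2^t/q + 2^{t−1} + 1), where ζ is the Riemann zeta function. -/
noncomputable section

open Real Set MeasureTheory

open scoped ENNReal in
private lemma zetaAux_summable {p : ℕ} (hp : 2 ≤ p) :
    Summable (fun n : ℕ => (1:ℝ) / ((n:ℝ) + 1) ^ p) := by
  have h : Summable (fun n : ℕ => 1 / (n : ℝ) ^ p) :=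
    Real.summable_one_div_nat_pow.mpr (by omega)
  have h2 := (summable_nat_add_iff 1).mpr h
  refine h2.congr fun n => ?_
  push_cast
  ring_nf

private lemma zetaAux_nonneg (p : ℕ) : 0 ≤ zetaSum p :=
  tsum_nonneg fun n => by positivity

open scoped ENNReal in
private lemma zetaAux_ofReal {p : ℕ} (hp : 2 ≤ p) :
    (∑' n : ℕ, ENNReal.ofReal ((1:ℝ) / ((n:ℝ) + 1) ^ p)) = ENNReal.ofReal (zetaSum p) :=
  (ENNReal.ofReal_tsum_of_nonneg (fun n => by positivity) (zetaAux_summable hp)).symm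

open scoped ENNReal in
/-- Inner sum bound: `Σ_{k≥1, k≠N} 1/|N-k|^t ≤ 2 ζ(t)` in `ℝ≥0∞`. -/
private lemma inner_sum_bound (t N : ℕ) :
    (∑' k : ℕ, ENNReal.ofReal
        (if (k + 1) ≠ N then (1:ℝ) / |(N:ℝ) - ((k:ℝ) + 1)| ^ t else 0))
      ≤ 2 * ∑' n : ℕ, ENNReal.ofReal ((1:ℝ) / ((n:ℝ) + 1) ^ t) := by
  set z : ℕ → ℝ≥0∞ := fun n => ENNReal.ofReal ((1:ℝ) / ((n:ℝ) + 1) ^ t) with hz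
  have step : ∀ k : ℕ,
      ENNReal.ofReal (if (k + 1) ≠ N then (1:ℝ) / |(N:ℝ) - ((k:ℝ) + 1)| ^ t else 0)
        ≤ (if k + 1 < N then z (N - 2 - k) else 0) + (if N < k + 1 then z (k - N) else 0) := by
    intro k
    rcases lt_trichotomy (k + 1) N with h | h | h
    · have hne : k + 1 ≠ N := by omega
      have hpos : (0:ℝ) < (N:ℝ) - ((k:ℝ) + 1) := by
        have : ((k:ℝ) + 1) < (N:ℝ) := by exact_mod_cast h
        linarith
      have hcast : (N:ℝ) - ((k:ℝ) + 1) = ((N - 2 - k : ℕ):ℝ) + 1 := by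
        have h1 : (N - 2 - k : ℕ) = N - (k + 2) := by omega
        rw [h1, Nat.cast_sub (by omega : k + 2 ≤ N)]
        push_cast
        ring
      rw [if_pos hne, if_pos h, if_neg (by omega : ¬ N < k + 1), add_zero,
        abs_of_pos hpos, hcast]
    · simp [h]
    · have hne : k + 1 ≠ N := by omega
      have hcast : |(N:ℝ) - ((k:ℝ) + 1)| = ((k - N : ℕ):ℝ) + 1 := by
        have h1 : ((N:ℝ)) < (k:ℝ) + 1 := by exact_mod_cast h
        rw [abs_of_neg (by linarith), Nat.cast_sub (by omega : N ≤ k)]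
        ring
      rw [if_pos hne, if_neg (by omega : ¬ k + 1 < N), if_pos h, zero_add, hcast]
  calc (∑' k : ℕ, ENNReal.ofReal
        (if (k + 1) ≠ N then (1:ℝ) / |(N:ℝ) - ((k:ℝ) + 1)| ^ t else 0))
      ≤ ∑' k : ℕ, ((if k + 1 < N then z (N - 2 - k) else 0)
          + (if N < k + 1 then z (k - N) else 0)) := ENNReal.tsum_le_tsum step
    _ = (∑' k : ℕ, if k + 1 < N then z (N - 2 - k) else 0)
          + ∑' k : ℕ, if N < k + 1 then z (k - N) else 0 := ENNReal.tsum_add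
    _ ≤ (∑' n : ℕ, z n) + ∑' n : ℕ, z n := by
        refine add_le_add ?_ ?_
        · have h1 : (∑' k : ℕ, if k + 1 < N then z (N - 2 - k) else 0)
              = ∑ k ∈ Finset.range (N - 1), if k + 1 < N then z (N - 2 - k) else 0 :=
            tsum_eq_sum (fun k hk => by
              rw [if_neg]
              simp only [Finset.mem_range] at hk
              omega)
          rw [h1]
          have h2 : ∀ k ∈ Finset.range (N - 1),
              (if k + 1 < N then z (N - 2 - k) else 0) = z (N - 1 - 1 - k) := by
            intro k hk
            simp only [Finset.mem_range] at hk
            rw [if_pos (by omega)]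
            exact congrArg z (by omega)
          rw [Finset.sum_congr rfl h2, Finset.sum_range_reflect]
          exact ENNReal.sum_le_tsum _
        · have hinj : Function.Injective (fun n : ℕ => n + N) :=
            fun a b hab => Nat.add_right_cancel hab
          have hsup : Function.support (fun k : ℕ => if N < k + 1 then z (k - N) else 0)
              ⊆ Set.range (fun n : ℕ => n + N) := by
            intro k hk
            have hNk : N ≤ k := by
              by_contra hcon
              exact hk (if_neg (by omega : ¬ N < k + 1))
            exact ⟨k - N, by show k - N + N = k; omega⟩
          have h3 := hinj.tsum_eq (f := fun k : ℕ => if N < k + 1 then z (k - N) else 0) hsup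
          rw [← h3]
          refine le_of_eq (tsum_congr fun n => ?_)
          show (if N < n + N + 1 then z (n + N - N) else 0) = z n
          rw [if_pos (by omega : N < n + N + 1)]
          exact congrArg z (by omega)
    _ = 2 * ∑' n : ℕ, z n := (two_mul _).symm

/-- Pointwise bound: split according to whether `k` or `|sq - k|` is at least `sq/2`. -/
private lemma pointwise_bound (t q s k : ℕ) (ht : 3 ≤ t) (hq : 1 ≤ q)
    (hne : (k + 1) ≠ (s + 1) * q) :
    (1:ℝ) / (((k:ℝ) + 1) ^ (t - 1) * |((s:ℝ) + 1) * q - ((k:ℝ) + 1)| ^ t)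
      ≤ (2 / (((s:ℝ) + 1) * q)) ^ (t - 1) * (1 / |((s:ℝ) + 1) * q - ((k:ℝ) + 1)| ^ t)
        + (2 / (((s:ℝ) + 1) * q)) ^ t * (1 / ((k:ℝ) + 1) ^ (t - 1)) := by
  set S : ℝ := ((s:ℝ) + 1) * q with hSdef
  set K : ℝ := (k:ℝ) + 1 with hKdef
  have hq0 : (0:ℝ) < q := by exact_mod_cast (by omega : 0 < q)
  have hS0 : 0 < S := by positivity
  have hK1 : (1:ℝ) ≤ K := by
    have hknn : (0:ℝ) ≤ (k:ℝ) := Nat.cast_nonneg k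
    rw [hKdef]; linarith
  have hK0 : 0 < K := by linarith
  have hm1 : (1:ℝ) ≤ |S - K| := by
    have hne' : ((s:ℤ) + 1) * (q:ℤ) ≠ (k:ℤ) + 1 := by
      intro h
      apply hne
      exact_mod_cast h.symm
    have hcast : S - K = ((((s:ℤ) + 1) * (q:ℤ) - ((k:ℤ) + 1) : ℤ) : ℝ) := by
      rw [hSdef, hKdef]; push_cast; ring
    rw [hcast, ← Int.cast_abs]
    exact_mod_cast Int.one_le_abs (sub_ne_zero.mpr hne')
  have hm0 : (0:ℝ) < |S - K| := by linarith
  by_cases hc : S / 2 ≤ K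
  · have h1 : (S / 2) ^ (t - 1) ≤ K ^ (t - 1) :=
      pow_le_pow_left₀ (by positivity) hc _
    calc (1:ℝ) / (K ^ (t - 1) * |S - K| ^ t)
        ≤ 1 / ((S / 2) ^ (t - 1) * |S - K| ^ t) := by
          gcongr
      _ = (2 / S) ^ (t - 1) * (1 / |S - K| ^ t) := by
          rw [← inv_div S 2, inv_pow, one_div, one_div, mul_inv]
      _ ≤ _ := le_add_of_nonneg_right (by positivity)
  · push_neg at hc
    have hmS : S / 2 ≤ |S - K| := by
      have : S - K = |S - K| ∨ S - K ≤ 0 := by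
        rcases le_or_gt 0 (S - K) with h | h
        · exact Or.inl (abs_of_nonneg h).symm
        · exact Or.inr h.le
      rcases abs_cases (S - K) with ⟨h, _⟩ | ⟨h, _⟩ <;> [linarith; linarith]
    have h1 : (S / 2) ^ t ≤ |S - K| ^ t := pow_le_pow_left₀ (by positivity) hmS _
    calc (1:ℝ) / (K ^ (t - 1) * |S - K| ^ t)
        ≤ 1 / (K ^ (t - 1) * (S / 2) ^ t) := by
          gcongr
      _ = (2 / S) ^ t * (1 / K ^ (t - 1)) := by
          rw [← inv_div S 2, inv_pow, one_div, one_div, mul_inv, mul_comm]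
      _ ≤ _ := le_add_of_nonneg_left (by positivity)

/-- **Lemma (double-sum estimate).** For integers `t ≥ 3` and `q ≥ 3`,
`Σ_{s≥1} Σ_{k≥1, k≠sq} 1/(k^{t-1}|sq-k|^t) ≤ (2ζ(t-1)ζ(t)/q^{t-1})(2^t/q + 2^{t-1} + 1)`. -/
theorem double_sum_estimate (t q : ℕ) (ht : 3 ≤ t) (hq : 3 ≤ q) :
    (∑' p : ℕ × ℕ,
        if (p.2 + 1) ≠ (p.1 + 1) * q then
          (1:ℝ) / (((p.2:ℝ) + 1) ^ (t - 1) * |((p.1:ℝ) + 1) * q - ((p.2:ℝ) + 1)| ^ t)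
        else 0) ≤
      (2 * zetaSum (t - 1) * zetaSum t / (q:ℝ) ^ (t - 1)) *
        ((2:ℝ) ^ t / q + (2:ℝ) ^ (t - 1) + 1) := by
  classical
  obtain ⟨τ, rfl⟩ : ∃ τ, t = τ + 1 := ⟨t - 1, by omega⟩
  simp only [Nat.add_sub_cancel] at *
  have hτ2 : 2 ≤ τ := by omega
  have hq0 : (0:ℝ) < q := by exact_mod_cast (by omega : 0 < q)
  -- the real summand
  set F : ℕ × ℕ → ℝ := fun p =>
    if (p.2 + 1) ≠ (p.1 + 1) * q then
      (1:ℝ) / (((p.2:ℝ) + 1) ^ τ * |((p.1:ℝ) + 1) * q - ((p.2:ℝ) + 1)| ^ (τ + 1))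
    else 0 with hF
  have hFnn : ∀ p, 0 ≤ F p := by
    intro p
    simp only [hF]
    split <;> positivity
  -- ENNReal majorants
  set G1 : ℕ × ℕ → ENNReal := fun p =>
    ENNReal.ofReal ((2 / (((p.1:ℝ) + 1) * q)) ^ τ) *
      ENNReal.ofReal (if (p.2 + 1) ≠ (p.1 + 1) * q then
        (1:ℝ) / |((p.1:ℝ) + 1) * q - ((p.2:ℝ) + 1)| ^ (τ + 1) else 0) with hG1
  set G2 : ℕ × ℕ → ENNReal := fun p =>
    ENNReal.ofReal ((2 / (((p.1:ℝ) + 1) * q)) ^ (τ + 1)) *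
      ENNReal.ofReal ((1:ℝ) / ((p.2:ℝ) + 1) ^ τ) with hG2
  have hpt : ∀ p : ℕ × ℕ, ENNReal.ofReal (F p) ≤ G1 p + G2 p := by
    intro p
    by_cases hc : (p.2 + 1) ≠ (p.1 + 1) * q
    · have hreal := pointwise_bound (τ + 1) q p.1 p.2 (by omega) (by omega) hc
      simp only [Nat.add_sub_cancel] at hreal
      calc ENNReal.ofReal (F p)
          ≤ ENNReal.ofReal ((2 / (((p.1:ℝ) + 1) * q)) ^ τ *
              (1 / |((p.1:ℝ) + 1) * q - ((p.2:ℝ) + 1)| ^ (τ + 1))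
            + (2 / (((p.1:ℝ) + 1) * q)) ^ (τ + 1) * (1 / ((p.2:ℝ) + 1) ^ τ)) := by
            apply ENNReal.ofReal_le_ofReal
            simp only [hF, if_pos hc]
            exact hreal
        _ = G1 p + G2 p := by
            simp only [hG1, hG2, if_pos hc]
            rw [ENNReal.ofReal_add (by positivity) (by positivity),
              ENNReal.ofReal_mul (by positivity), ENNReal.ofReal_mul (by positivity)]
    · simp only [hF, if_neg hc, ENNReal.ofReal_zero]
      exact zero_le
  -- zeta sums in ENNReal
  set Zτ : ENNReal := ∑' n : ℕ, ENNReal.ofReal ((1:ℝ) / ((n:ℝ) + 1) ^ τ) with hZτ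
  set Zt : ENNReal := ∑' n : ℕ, ENNReal.ofReal ((1:ℝ) / ((n:ℝ) + 1) ^ (τ + 1)) with hZt
  have hZτ' : Zτ = ENNReal.ofReal (zetaSum τ) := zetaAux_ofReal hτ2
  have hZt' : Zt = ENNReal.ofReal (zetaSum (τ + 1)) := zetaAux_ofReal (by omega)
  -- bound on ∑ G1
  have hsumG1 : ∑' p : ℕ × ℕ, G1 p
      ≤ ENNReal.ofReal ((2 / (q:ℝ)) ^ τ) * Zτ * (2 * Zt) := by
    rw [ENNReal.tsum_prod']
    have hinner : ∀ s : ℕ, (∑' k : ℕ, G1 (s, k))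
        ≤ (ENNReal.ofReal ((2 / (q:ℝ)) ^ τ) * ENNReal.ofReal ((1:ℝ) / ((s:ℝ) + 1) ^ τ))
            * (2 * Zt) := by
      intro s
      simp only [hG1]
      rw [ENNReal.tsum_mul_left]
      have hcoef : ENNReal.ofReal ((2 / (((s:ℝ) + 1) * q)) ^ τ)
          = ENNReal.ofReal ((2 / (q:ℝ)) ^ τ) * ENNReal.ofReal ((1:ℝ) / ((s:ℝ) + 1) ^ τ) := by
        rw [← ENNReal.ofReal_mul (by positivity)]
        congr 1
        have h0 : (2 / (((s:ℝ) + 1) * q)) = (2 / (q:ℝ)) * (1 / ((s:ℝ) + 1)) := by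
          have hq0 : (q:ℝ) ≠ 0 := by positivity
          have hs0 : ((s:ℝ) + 1) ≠ 0 := by positivity
          field_simp
        rw [h0, mul_pow, one_div, inv_pow, ← one_div]
      rw [hcoef]
      refine mul_le_mul_right ?_ _
      have hNcast : ((((s + 1) * q : ℕ)):ℝ) = ((s:ℝ) + 1) * q := by push_cast; ring
      have := inner_sum_bound (τ + 1) ((s + 1) * q)
      rw [hNcast] at this
      exact this
    calc (∑' s : ℕ, ∑' k : ℕ, G1 (s, k))
        ≤ ∑' s : ℕ, (ENNReal.ofReal ((2 / (q:ℝ)) ^ τ)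
            * ENNReal.ofReal ((1:ℝ) / ((s:ℝ) + 1) ^ τ)) * (2 * Zt) :=
          ENNReal.tsum_le_tsum hinner
      _ = ENNReal.ofReal ((2 / (q:ℝ)) ^ τ) * Zτ * (2 * Zt) := by
          rw [ENNReal.tsum_mul_right, ENNReal.tsum_mul_left]
  -- value of ∑ G2
  have hsumG2 : ∑' p : ℕ × ℕ, G2 p
      = ENNReal.ofReal ((2 / (q:ℝ)) ^ (τ + 1)) * Zt * Zτ := by
    rw [ENNReal.tsum_prod']
    have hs : ∀ s : ℕ, (∑' k : ℕ, G2 (s, k))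
        = (ENNReal.ofReal ((2 / (q:ℝ)) ^ (τ + 1))
            * ENNReal.ofReal ((1:ℝ) / ((s:ℝ) + 1) ^ (τ + 1))) * Zτ := by
      intro s
      simp only [hG2]
      rw [ENNReal.tsum_mul_left]
      congr 1
      rw [← ENNReal.ofReal_mul (by positivity)]
      congr 1
      have h0 : (2 / (((s:ℝ) + 1) * q)) = (2 / (q:ℝ)) * (1 / ((s:ℝ) + 1)) := by
        have hq0' : (q:ℝ) ≠ 0 := by positivity
        have hs0 : ((s:ℝ) + 1) ≠ 0 := by positivity
        field_simp
      rw [h0, mul_pow, one_div, inv_pow, ← one_div]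
    rw [tsum_congr hs, ENNReal.tsum_mul_right, ENNReal.tsum_mul_left]
  -- combine
  set RHS : ℝ := (2 * zetaSum τ * zetaSum (τ + 1) / (q:ℝ) ^ τ) *
      ((2:ℝ) ^ (τ + 1) / q + (2:ℝ) ^ τ + 1) with hRHS
  have hzτnn := zetaAux_nonneg τ
  have hztnn := zetaAux_nonneg (τ + 1)
  have hRHSnn : 0 ≤ RHS := by rw [hRHS]; positivity
  have hmain : ∑' p : ℕ × ℕ, ENNReal.ofReal (F p) ≤ ENNReal.ofReal RHS := by
    calc ∑' p : ℕ × ℕ, ENNReal.ofReal (F p)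
        ≤ ∑' p : ℕ × ℕ, (G1 p + G2 p) := ENNReal.tsum_le_tsum hpt
      _ = (∑' p : ℕ × ℕ, G1 p) + ∑' p : ℕ × ℕ, G2 p := ENNReal.tsum_add
      _ ≤ ENNReal.ofReal ((2 / (q:ℝ)) ^ τ) * Zτ * (2 * Zt)
            + ENNReal.ofReal ((2 / (q:ℝ)) ^ (τ + 1)) * Zt * Zτ :=
          add_le_add hsumG1 hsumG2.le
      _ = ENNReal.ofReal ((2 / (q:ℝ)) ^ τ * zetaSum τ * (2 * zetaSum (τ + 1))
            + (2 / (q:ℝ)) ^ (τ + 1) * zetaSum (τ + 1) * zetaSum τ) := by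
          rw [hZτ', hZt']
          rw [ENNReal.ofReal_add (by positivity) (by positivity)]
          congr 1
          · rw [ENNReal.ofReal_mul (by positivity), ENNReal.ofReal_mul (by positivity),
              ENNReal.ofReal_mul (by norm_num), ENNReal.ofReal_ofNat]
          · rw [ENNReal.ofReal_mul (by positivity), ENNReal.ofReal_mul (by positivity)]
      _ ≤ ENNReal.ofReal RHS := by
          apply ENNReal.ofReal_le_ofReal
          have hkey : RHS = (2 / (q:ℝ)) ^ τ * zetaSum τ * (2 * zetaSum (τ + 1))
              + (2 / (q:ℝ)) ^ (τ + 1) * zetaSum (τ + 1) * zetaSum τ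
              + zetaSum τ * zetaSum (τ + 1) *
                ((2:ℝ) ^ (τ + 1) / (q:ℝ) ^ (τ + 1) + 2 / (q:ℝ) ^ τ) := by
            rw [hRHS]
            ring
          rw [hkey]
          have : 0 ≤ zetaSum τ * zetaSum (τ + 1) *
              ((2:ℝ) ^ (τ + 1) / (q:ℝ) ^ (τ + 1) + 2 / (q:ℝ) ^ τ) := by positivity
          linarith
  -- transfer back to ℝ
  have hfin : ∑' p : ℕ × ℕ, ENNReal.ofReal (F p) ≠ ⊤ :=
    (hmain.trans_lt ENNReal.ofReal_lt_top).ne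
  have hFsummable : Summable F := by
    have h := ENNReal.summable_toReal hfin
    refine h.congr fun p => ?_
    rw [ENNReal.toReal_ofReal (hFnn p)]
  have heq : ENNReal.ofReal (∑' p : ℕ × ℕ, F p) = ∑' p : ℕ × ℕ, ENNReal.ofReal (F p) :=
    ENNReal.ofReal_tsum_of_nonneg hFnn hFsummable
  have hfinal : ∑' p : ℕ × ℕ, F p ≤ RHS := by
    rw [← ENNReal.ofReal_le_ofReal_iff hRHSnn, heq]
    exact hmain
  exact hfinal
end
end

section
/- There exists a constant c₀ ∈ (0, 1) with the following property: if (a_k)_{k≥1} is a sequence of complex numbers with M := sup_{k≥1} |a_k|·k⁴ < ∞, such that |a_q| ≤ c₀·M/q⁴ for every q ≥ 3, and such that Σ_{k≥1} a_k = 0 and Σ_{k≥1} a_{2k} = 0 (both series converging absolutely), then a_k = 0 for all k ≥ 1. -/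
noncomputable section

open Real Set MeasureTheory

lemma aux_partial (n : ℕ) : ∑ i ∈ Finset.range n, (1:ℝ) / ((i:ℝ) + 2) ^ 2 ≤ 1 - 1/((n:ℝ)+1) := by
  induction n with
  | zero => simp
  | succ n ih =>
    rw [Finset.sum_range_succ]
    have h : (1:ℝ) / ((n:ℝ) + 2) ^ 2 ≤ 1/((n:ℝ)+1) - 1/((n:ℝ)+2) := by
      have h1 : (0:ℝ) < (n:ℝ) + 1 := by positivity
      have h2 : (0:ℝ) < (n:ℝ) + 2 := by positivity
      rw [div_sub_div _ _ (ne_of_gt h1) (ne_of_gt h2), div_le_div_iff₀ (by positivity) (by positivity)]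
      nlinarith
    have he : ((n:ℕ):ℝ) + 1 + 1 = (n:ℝ) + 2 := by ring
    push_cast
    rw [he]
    linarith

lemma aux_nonneg (i : ℕ) : (0:ℝ) ≤ (1:ℝ) / ((i:ℝ) + 2) ^ 2 := by positivity

lemma aux_bound (n : ℕ) : ∑ i ∈ Finset.range n, (1:ℝ) / ((i:ℝ) + 2) ^ 2 ≤ 1 := by
  have h := aux_partial n
  have : (0:ℝ) ≤ 1/((n:ℝ)+1) := by positivity
  linarith

lemma aux_tsum_le : ∑' k : ℕ, (1:ℝ) / ((k:ℝ) + 2) ^ 2 ≤ 1 :=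
  Real.tsum_le_of_sum_range_le aux_nonneg aux_bound

lemma aux_summable : Summable (fun k : ℕ => (1:ℝ) / ((k:ℝ) + 2) ^ 2) :=
  summable_of_sum_range_le aux_nonneg aux_bound


set_option maxHeartbeats 1000000 in
/-- **Lemma (vanishing of Fourier coefficients).** There is `c₀ ∈ (0,1)` such that any
sequence `(a_k)_{k≥1}` of complex numbers with `M := sup_k |a_k| k⁴ < ∞`,
`|a_q| ≤ c₀ M/q⁴` for all `q ≥ 3`, and `Σ_{k≥1} a_k = 0 = Σ_{k≥1} a_{2k}` (absolutely
convergent), vanishes identically. -/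
theorem coefficients_vanish :
    ∃ c₀ : ℝ, 0 < c₀ ∧ c₀ < 1 ∧
      ∀ a : ℕ → ℂ,
        BddAbove (Set.range fun k : ℕ => ‖a (k + 1)‖ * ((k:ℝ) + 1) ^ 4) →
        (∀ q : ℕ, 3 ≤ q →
          ‖a q‖ ≤
            c₀ * (⨆ k : ℕ, ‖a (k + 1)‖ * ((k:ℝ) + 1) ^ 4) / (q:ℝ) ^ 4) →
        Summable (fun k : ℕ => ‖a (k + 1)‖) →
        Summable (fun k : ℕ => ‖a (2 * (k + 1))‖) →
        (∑' k : ℕ, a (k + 1)) = 0 →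
        (∑' k : ℕ, a (2 * (k + 1))) = 0 →
        ∀ k : ℕ, 1 ≤ k → a k = 0 := by
  refine ⟨1/2, by norm_num, by norm_num, ?_⟩
  intro a hbdd hq hs1 hs2 ht1 ht2
  set M := ⨆ k : ℕ, ‖a (k + 1)‖ * ((k:ℝ) + 1) ^ 4 with hMdef
  have hterm : ∀ k : ℕ, ‖a (k+1)‖ * ((k:ℝ)+1)^4 ≤ M := by
    intro k; exact le_ciSup hbdd k
  have hM0 : 0 ≤ M := le_trans (by positivity) (hterm 0)
  -- even part: bound on a 2
  have hsg : Summable (fun k : ℕ => a (2*(k+1))) := by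
    apply Summable.of_norm
    simpa using hs2
  have hsn2 : Summable (fun k : ℕ => ‖a (2*(k+1+1))‖) := by
    exact (summable_nat_add_iff 1).2 hs2
  have h2eq : a 2 = -∑' k : ℕ, a (2*(k+1+1)) := by
    have h := Summable.tsum_eq_zero_add hsg
    rw [ht2] at h
    have h' : a (2*(0+1)) + (∑' k : ℕ, a (2*(k+1+1))) = 0 := h.symm
    have := eq_neg_of_add_eq_zero_left h'
    simpa using this
  have hev : ∀ k : ℕ, ‖a (2*(k+1+1))‖ ≤ (M/32) * (1/(((k:ℝ)+2)^2)) := by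
    intro k
    have h3 : 3 ≤ 2*(k+1+1) := by omega
    have h := hq _ h3
    have hc : ((2*(k+1+1) : ℕ):ℝ) = 2*((k:ℝ)+2) := by push_cast; ring
    rw [hc] at h
    have hx1 : (1:ℝ) ≤ (k:ℝ)+2 := by
      have := Nat.cast_nonneg (α := ℝ) k; linarith
    have hxp : (0:ℝ) < (k:ℝ)+2 := by positivity
    have hpw : ((k:ℝ)+2)^2 ≤ ((k:ℝ)+2)^4 := pow_le_pow_right₀ hx1 (by norm_num)
    calc ‖a (2*(k+1+1))‖ ≤ 1/2 * M / (2*((k:ℝ)+2))^4 := h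
      _ = (M/32) * (1/((k:ℝ)+2)^4) := by
          have hne : ((k:ℝ)+2) ≠ 0 := ne_of_gt hxp
          rw [mul_pow]
          field_simp
          ring
      _ ≤ (M/32) * (1/((k:ℝ)+2)^2) := by
          apply mul_le_mul_of_nonneg_left _ (by positivity)
          apply one_div_le_one_div_of_le (by positivity) hpw
  have h2bound : ‖a 2‖ ≤ M/32 := by
    have : ‖a 2‖ = ‖∑' k : ℕ, a (2*(k+1+1))‖ := by
      rw [h2eq]; simp
    rw [this]
    calc ‖∑' k : ℕ, a (2*(k+1+1))‖ ≤ ∑' k : ℕ, ‖a (2*(k+1+1))‖ := by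
          apply norm_tsum_le_tsum_norm
          simpa using hsn2
      _ ≤ ∑' k : ℕ, (M/32) * (1/(((k:ℝ)+2)^2)) := by
          apply Summable.tsum_le_tsum _ (by simpa using hsn2) (aux_summable.mul_left _)
          intro k; simpa using hev k
      _ = (M/32) * ∑' k : ℕ, (1:ℝ)/(((k:ℝ)+2)^2) := tsum_mul_left
      _ ≤ (M/32) * 1 := mul_le_mul_of_nonneg_left aux_tsum_le (by positivity)
      _ = M/32 := by ring
  -- full sum: bound on a 1
  have hsf : Summable (fun k : ℕ => a (k+1)) := by
    apply Summable.of_norm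
    simpa using hs1
  have hsn1 : Summable (fun k : ℕ => ‖a (k+1+1)‖) :=
    (summable_nat_add_iff 1).2 hs1
  have h1eq : a 1 = -∑' k : ℕ, a (k+1+1) := by
    have h := Summable.tsum_eq_zero_add hsf
    rw [ht1] at h
    have h' : a (0+1) + (∑' k : ℕ, a (k+1+1)) = 0 := h.symm
    have := eq_neg_of_add_eq_zero_left h'
    simpa using this
  have hod : ∀ k : ℕ, ‖a (k+1+1)‖ ≤ (M/2) * (1/(((k:ℝ)+2)^2)) := by
    intro k
    match k with
    | 0 =>
      calc ‖a 2‖ ≤ M/32 := h2bound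
        _ ≤ (M/2) * (1/(((0:ℕ):ℝ)+2)^2) := by push_cast; nlinarith
    | (n+1) =>
      have h3 : 3 ≤ n+1+1+1 := by omega
      have h := hq _ h3
      have hc : ((n+1+1+1 : ℕ):ℝ) = ((n:ℝ)+1)+2 := by push_cast; ring
      rw [hc] at h
      have hx1 : (1:ℝ) ≤ ((n:ℝ)+1)+2 := by
        have := Nat.cast_nonneg (α := ℝ) n; linarith
      have hpw : (((n:ℝ)+1)+2)^2 ≤ (((n:ℝ)+1)+2)^4 := pow_le_pow_right₀ hx1 (by norm_num)
      calc ‖a (n+1+1+1)‖ ≤ 1/2 * M / (((n:ℝ)+1)+2)^4 := h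
        _ = (M/2) * (1/(((n:ℝ)+1)+2)^4) := by ring
        _ ≤ (M/2) * (1/(((n:ℝ)+1)+2)^2) := by
            apply mul_le_mul_of_nonneg_left _ (by positivity)
            apply one_div_le_one_div_of_le (by positivity) hpw
        _ = (M/2) * (1/((((n+1:ℕ)):ℝ)+2)^2) := by push_cast; ring
  have h1bound : ‖a 1‖ ≤ M/2 := by
    have : ‖a 1‖ = ‖∑' k : ℕ, a (k+1+1)‖ := by
      rw [h1eq]; simp
    rw [this]
    calc ‖∑' k : ℕ, a (k+1+1)‖ ≤ ∑' k : ℕ, ‖a (k+1+1)‖ := by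
          apply norm_tsum_le_tsum_norm
          simpa using hsn1
      _ ≤ ∑' k : ℕ, (M/2) * (1/(((k:ℝ)+2)^2)) := by
          apply Summable.tsum_le_tsum _ (by simpa using hsn1) (aux_summable.mul_left _)
          intro k; simpa using hod k
      _ = (M/2) * ∑' k : ℕ, (1:ℝ)/(((k:ℝ)+2)^2) := tsum_mul_left
      _ ≤ (M/2) * 1 := mul_le_mul_of_nonneg_left aux_tsum_le (by positivity)
      _ = M/2 := by ring
  -- conclude M = 0
  have hall : ∀ k : ℕ, ‖a (k+1)‖ * ((k:ℝ)+1)^4 ≤ M/2 := by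
    intro k
    match k with
    | 0 => simpa using h1bound
    | 1 =>
      have : ‖a 2‖ * (((1:ℕ):ℝ)+1)^4 = 16 * ‖a 2‖ := by push_cast; ring
      rw [this]; linarith [h2bound]
    | (n+2) =>
      have h3 : 3 ≤ n+2+1 := by omega
      have h := hq _ h3
      have hc : ((n+2+1 : ℕ):ℝ) = ((n+2:ℕ):ℝ)+1 := by push_cast; ring
      rw [hc] at h
      have hpos : (0:ℝ) < (((n+2:ℕ)):ℝ)+1 := by positivity
      calc ‖a (n+2+1)‖ * ((((n+2:ℕ)):ℝ)+1)^4
          ≤ (1/2 * M / ((((n+2:ℕ)):ℝ)+1)^4) * ((((n+2:ℕ)):ℝ)+1)^4 := by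
            apply mul_le_mul_of_nonneg_right h (by positivity)
        _ = M/2 := by field_simp
  have hM2 : M ≤ M/2 := ciSup_le hall
  have hMz : M = 0 := by linarith
  intro k hk
  obtain ⟨n, rfl⟩ : ∃ n, k = n + 1 := ⟨k-1, by omega⟩
  have h := hterm n
  rw [hMz] at h
  have hpos : (0:ℝ) < ((n:ℝ)+1)^4 := by positivity
  have habs : ‖a (n+1)‖ = 0 := by
    nlinarith [norm_nonneg (a (n+1))]
  exact norm_eq_zero.mp habs
end
end

section
/- Let n : ℝ → ℝ be a continuous 1-periodic even function with zero average and absolutely convergent Fourier series, i.e. n(s) = Σ_{|k|≥1} n̂_k e^{2πiks} with Σ|n̂_k| < ∞ and n̂_k = n̂_{−k}. If Σ_{j=0}^{q−1} n(j/q) = 0 for every integer q ≥ 3, and n(0) = 0 and n(1/2) = 0, then n ≡ 0. -/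
noncomputable section

open Real Set MeasureTheory

section CircleCaseAux


-- reindexing: sum over multiples of d
lemma dvd_reindex (f : ℤ → ℂ) (d : ℕ) (hd : 0 < d) :
    ∑' M : ℤ, (if (d : ℤ) ∣ M then f M else 0) = ∑' m : ℤ, f (d * m) := by
  have hinj : Function.Injective (fun m : ℤ => (d : ℤ) * m) := fun a b h => by
    have hd' : (d : ℤ) ≠ 0 := by exact_mod_cast hd.ne'
    exact mul_left_cancel₀ hd' h
  have := Function.Injective.tsum_eq (f := fun M : ℤ => if (d : ℤ) ∣ M then f M else 0) hinj ?_
  · rw [← this]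
    refine tsum_congr fun m => ?_
    simp [Dvd.intro m rfl]
  · intro M hM
    simp only [Function.mem_support, ne_eq, ite_eq_right_iff, not_forall] at hM
    obtain ⟨⟨m, rfl⟩, -⟩ := hM
    exact ⟨m, rfl⟩

-- geometric sum of roots of unity
lemma geom_roots (q : ℕ) (hq : 1 ≤ q) (k : ℤ) :
    ∑ j ∈ Finset.range q, Complex.exp (2 * (Real.pi : ℂ) * Complex.I * k * ((j : ℂ) / q)) =
      if (q : ℤ) ∣ k then (q : ℂ) else 0 := by
  have hq0 : (q : ℂ) ≠ 0 := Nat.cast_ne_zero.2 (by omega)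
  set x : ℂ := Complex.exp (2 * (Real.pi : ℂ) * Complex.I * k / q) with hx
  have hpow : ∀ j : ℕ, Complex.exp (2 * (Real.pi : ℂ) * Complex.I * k * ((j : ℂ) / q)) = x ^ j := by
    intro j
    rw [hx, ← Complex.exp_nat_mul]
    congr 1
    field_simp
  simp only [hpow]
  by_cases h : (q : ℤ) ∣ k
  · obtain ⟨t, rfl⟩ := h
    have hx1 : x = 1 := by
      rw [hx]
      rw [show (2 * (Real.pi : ℂ) * Complex.I * (((q : ℤ) * t : ℤ) : ℂ) / q)
            = (t : ℂ) * (2 * Real.pi * Complex.I) by push_cast; field_simp,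
        Complex.exp_int_mul_two_pi_mul_I]
    simp [hx1]
  · rw [if_neg h]
    have hxq : x ^ q = 1 := by
      rw [hx, ← Complex.exp_nat_mul]
      have : (q : ℂ) * (2 * (Real.pi : ℂ) * Complex.I * k / q) = k * (2 * Real.pi * Complex.I) := by
        field_simp
      rw [this, Complex.exp_int_mul_two_pi_mul_I]
    have hx1 : x ≠ 1 := by
      intro hx1
      rw [hx, Complex.exp_eq_one_iff] at hx1
      obtain ⟨m, hm⟩ := hx1
      apply h
      refine ⟨m, ?_⟩
      have h2 : (2 * (Real.pi : ℂ) * Complex.I) ≠ 0 := by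
        simp [Real.pi_ne_zero, Complex.I_ne_zero]
      have : (k : ℂ) = q * m := by
        field_simp at hm
        have h3 : (2 * (Real.pi : ℂ) * Complex.I) * (k : ℂ)
            = (2 * (Real.pi : ℂ) * Complex.I) * ((q : ℂ) * m) := by
          rw [hm]
        exact mul_left_cancel₀ h2 h3
      exact_mod_cast this
    rw [geom_sum_eq hx1, hxq]
    simp

lemma norm_exp_unit (k : ℤ) (s : ℝ) :
    ‖Complex.exp (2 * (Real.pi : ℂ) * Complex.I * k * s)‖ = 1 := by
  rw [show (2 * (Real.pi : ℂ) * Complex.I * k * s) = ((2 * Real.pi * k * s : ℝ) : ℂ) * Complex.I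
    by push_cast; ring]
  rw [Complex.norm_exp_ofReal_mul_I]

lemma summable_term (c : ℤ → ℂ) (hsum : Summable fun k : ℤ => ‖c k‖) (s : ℝ) :
    Summable fun k : ℤ => c k * Complex.exp (2 * (Real.pi : ℂ) * Complex.I * k * s) := by
  apply Summable.of_norm
  simp only [norm_mul, norm_exp_unit, mul_one]
  exact hsum

lemma sumq (n : ℝ → ℝ) (c : ℤ → ℂ) (hsum : Summable fun k : ℤ => ‖c k‖)
    (hrep : ∀ s : ℝ, (n s : ℂ) =
      ∑' k : ℤ, c k * Complex.exp (2 * (Real.pi : ℂ) * Complex.I * k * s))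
    (q : ℕ) (hq : 1 ≤ q) :
    ((∑ j ∈ Finset.range q, n ((j : ℝ) / q) : ℝ) : ℂ) = q * ∑' m : ℤ, c (q * m) := by
  have hcast : ∀ j : ℕ, (((j : ℝ) / q : ℝ) : ℂ) = (j : ℂ) / q := by intro j; push_cast; ring
  calc ((∑ j ∈ Finset.range q, n ((j : ℝ) / q) : ℝ) : ℂ)
      = ∑ j ∈ Finset.range q, ∑' k : ℤ,
          c k * Complex.exp (2 * (Real.pi : ℂ) * Complex.I * k * ((j : ℂ) / q)) := by
        push_cast
        refine Finset.sum_congr rfl fun j _ => ?_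
        rw [hrep ((j : ℝ) / q)]
        simp_rw [hcast j]
    _ = ∑' k : ℤ, ∑ j ∈ Finset.range q,
          c k * Complex.exp (2 * (Real.pi : ℂ) * Complex.I * k * ((j : ℂ) / q)) := by
        refine (Summable.tsum_finsetSum fun j _ => ?_).symm
        have := summable_term c hsum ((j : ℝ) / q)
        simpa [hcast j] using this
    _ = ∑' k : ℤ, (q : ℂ) * (if (q : ℤ) ∣ k then c k else 0) := by
        refine tsum_congr fun k => ?_
        rw [← Finset.mul_sum, geom_roots q hq k]
        by_cases h : (q : ℤ) ∣ k <;> simp [h] <;> ring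
    _ = (q : ℂ) * ∑' k : ℤ, (if (q : ℤ) ∣ k then c k else 0) := tsum_mul_left
    _ = q * ∑' m : ℤ, c (q * m) := by rw [dvd_reindex c q (by omega)]

def Kfac (p : ℕ) (M : ℤ) : ℂ := if (p : ℤ) ∣ M then 0 else 1

def Kprod (pp : Finset ℕ) (M : ℤ) : ℂ := ∏ p ∈ pp, Kfac p M

lemma Kprod_eq (pp : Finset ℕ) (M : ℤ) :
    Kprod pp M = if (∀ p ∈ pp, ¬ (p : ℤ) ∣ M) then 1 else 0 := by
  by_cases h : ∀ p ∈ pp, ¬ (p : ℤ) ∣ M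
  · rw [if_pos h]
    exact Finset.prod_eq_one fun p hp => by simp [Kfac, h p hp]
  · rw [if_neg h]
    push_neg at h
    obtain ⟨p, hp, hd⟩ := h
    exact Finset.prod_eq_zero hp (by simp [Kfac, hd])

lemma Kprod_norm_le (pp : Finset ℕ) (M : ℤ) : ‖Kprod pp M‖ ≤ 1 := by
  rw [Kprod_eq]
  split <;> simp

lemma summable_mul_c (c : ℤ → ℂ) (hsum : Summable fun k : ℤ => ‖c k‖)
    (k : ℕ) (hk : 1 ≤ k) : Summable fun M : ℤ => ‖c ((k : ℤ) * M)‖ := by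
  apply hsum.comp_injective
  intro a b h
  have : (k : ℤ) ≠ 0 := by positivity
  exact mul_left_cancel₀ this h

lemma summable_Kc (c : ℤ → ℂ) (hsum : Summable fun k : ℤ => ‖c k‖)
    (pp : Finset ℕ) (k : ℕ) (hk : 1 ≤ k) (w : ℤ → ℂ) (hw : ∀ M, ‖w M‖ ≤ 1) :
    Summable fun M : ℤ => w M * Kprod pp M * c ((k : ℤ) * M) := by
  apply Summable.of_norm_bounded (summable_mul_c c hsum k hk)
  intro M
  rw [norm_mul, norm_mul]
  calc ‖w M‖ * ‖Kprod pp M‖ * ‖c ((k:ℤ) * M)‖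
      ≤ 1 * 1 * ‖c ((k:ℤ) * M)‖ := by
        gcongr
        exacts [hw M, Kprod_norm_le pp M]
    _ = ‖c ((k:ℤ) * M)‖ := by ring

lemma sieve (c : ℤ → ℂ) (hsum : Summable fun k : ℤ => ‖c k‖)
    (hS : ∀ q : ℕ, 1 ≤ q → ∑' m : ℤ, c ((q : ℤ) * m) = 0) :
    ∀ pp : Finset ℕ, (∀ p ∈ pp, p.Prime) → ∀ k : ℕ, 1 ≤ k →
      ∑' M : ℤ, Kprod pp M * c ((k : ℤ) * M) = 0 := by
  intro pp
  induction pp using Finset.induction_on with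
  | empty =>
    intro _ k hk
    simpa [Kprod] using hS k hk
  | @insert p pp hpnot ih =>
    intro hprime k hk
    have hp : p.Prime := hprime p (Finset.mem_insert_self p pp)
    have hpp : ∀ q ∈ pp, q.Prime := fun q hq => hprime q (Finset.mem_insert_of_mem hq)
    have hKins : ∀ M : ℤ, Kprod (insert p pp) M = Kfac p M * Kprod pp M := fun M =>
      Finset.prod_insert hpnot
    have hsplit : ∀ M : ℤ, Kprod (insert p pp) M * c ((k : ℤ) * M)
        = Kprod pp M * c ((k : ℤ) * M)
          - (if (p : ℤ) ∣ M then (1:ℂ) else 0) * Kprod pp M * c ((k : ℤ) * M) := by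
      intro M
      rw [hKins M]
      by_cases h : (p : ℤ) ∣ M <;> simp [Kfac, h]
    have hsum1 : Summable fun M : ℤ => Kprod pp M * c ((k : ℤ) * M) := by
      simpa using summable_Kc c hsum pp k hk 1 (by simp)
    have hsum2 : Summable fun M : ℤ =>
        (if (p : ℤ) ∣ M then (1:ℂ) else 0) * Kprod pp M * c ((k : ℤ) * M) := by
      apply summable_Kc c hsum pp k hk
      intro M; split <;> simp
    calc ∑' M : ℤ, Kprod (insert p pp) M * c ((k : ℤ) * M)
        = (∑' M : ℤ, Kprod pp M * c ((k : ℤ) * M))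
          - ∑' M : ℤ, (if (p : ℤ) ∣ M then (1:ℂ) else 0) * Kprod pp M * c ((k : ℤ) * M) := by
          rw [← Summable.tsum_sub hsum1 hsum2]
          exact tsum_congr hsplit
      _ = 0 - ∑' m : ℤ, Kprod pp m * c (((k * p : ℕ) : ℤ) * m) := by
          congr 1
          · exact ih hpp k hk
          · -- reindex by M = p * m
            have hinj : Function.Injective (fun m : ℤ => (p : ℤ) * m) := fun a b h =>
              mul_left_cancel₀ (by exact_mod_cast hp.ne_zero) h
            rw [← Function.Injective.tsum_eq hinj (f := fun M : ℤ =>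
              (if (p : ℤ) ∣ M then (1:ℂ) else 0) * Kprod pp M * c ((k : ℤ) * M))]
            · refine tsum_congr fun m => ?_
              have hdvd : (p : ℤ) ∣ (p : ℤ) * m := Dvd.intro m rfl
              rw [if_pos hdvd, one_mul]
              have hK : Kprod pp ((p : ℤ) * m) = Kprod pp m := by
                refine Finset.prod_congr rfl fun q hq => ?_
                have hq' : q.Prime := hpp q hq
                have hqp : q ≠ p := fun h => hpnot (h ▸ hq)
                have : ((q : ℤ) ∣ (p : ℤ) * m) ↔ ((q : ℤ) ∣ m) := by
                  constructor
                  · intro h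
                    rcases (Int.Prime.dvd_mul' hq' h) with h1 | h1
                    · exfalso
                      have : q ∣ p := by exact_mod_cast h1
                      exact hqp ((Nat.prime_dvd_prime_iff_eq hq' hp).mp this)
                    · exact h1
                  · exact fun h => h.mul_left _
                simp [Kfac, this]
              rw [hK]
              congr 2
              push_cast
              ring
            · intro M hM
              simp only [Function.mem_support, ne_eq] at hM
              by_cases h : (p : ℤ) ∣ M
              · obtain ⟨m, rfl⟩ := h
                exact ⟨m, rfl⟩
              · exact absurd (by simp [h]) hM
      _ = 0 - 0 := by rw [ih hpp (k * p) (Nat.mul_pos hk hp.pos)]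
      _ = 0 := by ring

lemma ck_zero (c : ℤ → ℂ) (hsum : Summable fun k : ℤ => ‖c k‖) (hc0 : c 0 = 0)
    (hcsymm : ∀ k : ℤ, c (-k) = c k)
    (hS : ∀ q : ℕ, 1 ≤ q → ∑' m : ℤ, c ((q : ℤ) * m) = 0) :
    ∀ k : ℕ, 1 ≤ k → c (k : ℤ) = 0 := by
  intro k hk
  by_contra hne
  set ε := ‖c (k : ℤ) + c (k : ℤ)‖ with hε
  have hεpos : 0 < ε := by
    rw [hε, norm_pos_iff]
    intro h
    exact hne (add_self_eq_zero.mp h)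
  have htend := tendsto_tsum_compl_atTop_zero (fun M : ℤ => ‖c ((k : ℤ) * M)‖)
  obtain ⟨s₀, hs₀⟩ := Filter.mem_atTop_sets.mp (htend (Metric.ball_mem_nhds (0 : ℝ) hεpos))
  have hball : (∑' x : {x : ℤ // x ∉ s₀}, ‖c ((k : ℤ) * x)‖) < ε := by
    have h1 := hs₀ s₀ le_rfl
    simp only [Set.mem_preimage, Metric.mem_ball, Real.dist_eq, sub_zero] at h1
    calc (∑' x : {x : ℤ // x ∉ s₀}, ‖c ((k : ℤ) * x)‖)
        ≤ |∑' x : {x : ℤ // x ∉ s₀}, ‖c ((k : ℤ) * x)‖| := le_abs_self _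
      _ < ε := h1
  set P : ℕ := max 1 (s₀.sup Int.natAbs) with hP
  set pp := (Finset.range (P + 1)).filter Nat.Prime with hppdef
  have hppprime : ∀ p ∈ pp, p.Prime := fun p hp => (Finset.mem_filter.mp hp).2
  set f : ℤ → ℂ := fun M => Kprod pp M * c ((k : ℤ) * M) with hfdef
  have hfnorm : Summable fun M : ℤ => ‖f M‖ := by
    apply Summable.of_nonneg_of_le (fun M => norm_nonneg _) _ (summable_mul_c c hsum k hk)
    intro M
    rw [hfdef, norm_mul]
    calc ‖Kprod pp M‖ * ‖c ((k : ℤ) * M)‖ ≤ 1 * ‖c ((k : ℤ) * M)‖ := by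
          gcongr; exact Kprod_norm_le pp M
      _ = ‖c ((k : ℤ) * M)‖ := one_mul _
  have hf : Summable f := by simpa [hfdef] using summable_Kc c hsum pp k hk 1 (by simp)
  have htot : ∑' M, f M = 0 := sieve c hsum hS pp hppprime k hk
  have hK1 : ∀ M : ℤ, M.natAbs = 1 → Kprod pp M = 1 := by
    intro M hM
    rw [Kprod_eq, if_pos]
    intro p hp hdvd
    have hp' := hppprime p hp
    have h2 : (p : ℤ) ∣ (M.natAbs : ℤ) := Int.dvd_natAbs.mpr hdvd
    have h3 : p ∣ M.natAbs := by exact_mod_cast h2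
    rw [hM, Nat.dvd_one] at h3
    exact hp'.one_lt.ne' h3
  have hf1 : f 1 = c (k : ℤ) := by simp [hfdef, hK1 1 rfl]
  have hfm1 : f (-1) = c (k : ℤ) := by
    have h4 : ((k : ℤ) * (-1)) = -(k : ℤ) := by ring
    simp [hfdef, hK1 (-1) (by decide), h4, hcsymm]
  have hsplit := Summable.sum_add_tsum_compl (s := ({1, -1} : Finset ℤ)) hf
  have hpair : ∑ x ∈ ({1, -1} : Finset ℤ), f x = c (k : ℤ) + c (k : ℤ) := by
    rw [Finset.sum_pair (by norm_num), hf1, hfm1]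
  rw [htot, hpair] at hsplit
  have htail : c (k : ℤ) + c (k : ℤ) = - ∑' x : ↑(↑({1, -1} : Finset ℤ) : Set ℤ)ᶜ, f x :=
    eq_neg_of_add_eq_zero_left hsplit
  set g : ℤ → ℝ := fun M => if M ∈ s₀ then 0 else ‖c ((k : ℤ) * M)‖ with hgdef
  have hgnonneg : ∀ M, 0 ≤ g M := by
    intro M; rw [hgdef]; dsimp only; split
    · exact le_rfl
    · exact norm_nonneg _
  have hgsummable : Summable g := by
    apply Summable.of_nonneg_of_le hgnonneg _ (summable_mul_c c hsum k hk)
    intro M; rw [hgdef]; dsimp only; split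
    · exact norm_nonneg _
    · exact le_rfl
  have hptw : ∀ x : ↑(↑({1, -1} : Finset ℤ) : Set ℤ)ᶜ, ‖f (x : ℤ)‖ ≤ g (x : ℤ) := by
    rintro ⟨M, hM⟩
    simp only [Set.mem_compl_iff, Finset.coe_insert, Set.mem_insert_iff, Finset.coe_singleton,
      Set.mem_singleton_iff, not_or] at hM
    obtain ⟨hM1, hM2⟩ := hM
    by_cases hmem : M ∈ s₀
    · have hzero : f M = 0 := by
        rcases eq_or_ne M 0 with rfl | hM0
        · simp [hfdef, hc0]
        · have hNA1 : M.natAbs ≠ 1 := by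
            intro h
            rcases Int.natAbs_eq_iff.mp h with h | h
            · exact hM1 (by exact_mod_cast h)
            · exact hM2 (by exact_mod_cast h)
          obtain ⟨p, hp, hpdvd⟩ := Nat.exists_prime_and_dvd hNA1
          have hNApos : 0 < M.natAbs := Int.natAbs_pos.mpr hM0
          have hple : p ≤ M.natAbs := Nat.le_of_dvd hNApos hpdvd
          have hPle : M.natAbs ≤ P := le_trans (Finset.le_sup hmem) (le_max_right _ _)
          have hpmem : p ∈ pp := by
            rw [hppdef, Finset.mem_filter, Finset.mem_range]
            exact ⟨by omega, hp⟩
          have hKz : Kprod pp M = 0 := by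
            apply Finset.prod_eq_zero hpmem
            have h8 : (p : ℤ) ∣ (M.natAbs : ℤ) := Int.natCast_dvd_natCast.mpr hpdvd
            have : (p : ℤ) ∣ M := Int.dvd_natAbs.mp h8
            simp [Kfac, this]
          simp [hfdef, hKz]
      rw [hzero, hgdef]
      simp [hmem]
    · rw [hgdef]
      dsimp only
      rw [if_neg hmem, hfdef, norm_mul]
      calc ‖Kprod pp M‖ * ‖c ((k : ℤ) * M)‖ ≤ 1 * ‖c ((k : ℤ) * M)‖ := by
            gcongr; exact Kprod_norm_le pp M
        _ = ‖c ((k : ℤ) * M)‖ := one_mul _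
  have hbound : ε ≤ ∑' M : ℤ, g M := by
    calc ε = ‖c (k : ℤ) + c (k : ℤ)‖ := hε
      _ = ‖∑' x : ↑(↑({1, -1} : Finset ℤ) : Set ℤ)ᶜ, f (x : ℤ)‖ := by rw [htail, norm_neg]
      _ ≤ ∑' x : ↑(↑({1, -1} : Finset ℤ) : Set ℤ)ᶜ, ‖f (x : ℤ)‖ :=
          norm_tsum_le_tsum_norm (hfnorm.subtype _)
      _ ≤ ∑' M : ℤ, g M := by
          apply Summable.tsum_le_tsum_of_inj _ Subtype.coe_injective (fun M _ => hgnonneg M) hptw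
            (hfnorm.subtype _) hgsummable
  have hgsmall : ∑' M : ℤ, g M < ε := by
    have h5 := Summable.sum_add_tsum_compl (s := s₀) hgsummable
    have h6 : ∑ x ∈ s₀, g x = 0 := Finset.sum_eq_zero fun M hM => by simp [hgdef, hM]
    have h7 : (∑' x : ↑(↑s₀ : Set ℤ)ᶜ, g (x : ℤ)) = ∑' x : {x : ℤ // x ∉ s₀}, ‖c ((k : ℤ) * x)‖ := by
      apply tsum_congr
      rintro ⟨M, hM⟩
      simp only [Set.mem_compl_iff, Finset.mem_coe] at hM
      simp [hgdef, hM]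
    rw [h6, zero_add, h7] at h5
    rw [← h5]
    exact hball
  exact absurd (lt_of_le_of_lt hbound hgsmall) (lt_irrefl ε)

end CircleCaseAux

/-- **Remark (the circle case).** A continuous, 1-periodic, even, zero-average function
with absolutely convergent Fourier series, vanishing at `0` and `1/2` and with
`Σ_{j=0}^{q-1} n(j/q) = 0` for every `q ≥ 3`, vanishes identically. -/
theorem circle_case_vanishing (n : ℝ → ℝ) (c : ℤ → ℂ)
    (hcont : Continuous n) (hper : Function.Periodic n 1)
    (heven : ∀ s : ℝ, n (-s) = n s)
    (havg : (∫ x in (0:ℝ)..1, n x) = 0)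
    (hsum : Summable fun k : ℤ => ‖c k‖)
    (hc0 : c 0 = 0) (hcsymm : ∀ k : ℤ, c (-k) = c k)
    (hrep : ∀ s : ℝ, (n s : ℂ) = ∑' k : ℤ, c k * Complex.exp (2 * (π:ℂ) * Complex.I * k * s))
    (hvanish : ∀ q : ℕ, 3 ≤ q → ∑ j ∈ Finset.range q, n ((j:ℝ) / q) = 0)
    (h0 : n 0 = 0) (hhalf : n (1/2) = 0) :
    ∀ s : ℝ, n s = 0 := by
  have hsum' : Summable fun k : ℤ => ‖c k‖ := by
    simpa using hsum
  have hrep' : ∀ s : ℝ, (n s : ℂ) =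
      ∑' k : ℤ, c k * Complex.exp (2 * (Real.pi : ℂ) * Complex.I * k * s) := hrep
  have hS : ∀ q : ℕ, 1 ≤ q → ∑' m : ℤ, c ((q : ℤ) * m) = 0 := by
    intro q hq
    have hsq := sumq n c hsum' hrep' q hq
    have hzero : ∑ j ∈ Finset.range q, n ((j : ℝ) / q) = 0 := by
      by_cases h3 : 3 ≤ q
      · exact hvanish q h3
      · interval_cases q
        · norm_num [Finset.sum_range_one, h0]
        · rw [Finset.sum_range_succ, Finset.sum_range_one]
          norm_num [h0, hhalf]
    rw [hzero] at hsq
    have hq0 : ((q : ℂ)) ≠ 0 := Nat.cast_ne_zero.2 (by omega)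
    have := hsq.symm
    rw [Complex.ofReal_zero] at this
    rcases mul_eq_zero.mp this with h | h
    · exact absurd h hq0
    · exact h
  have hck : ∀ k : ℤ, c k = 0 := by
    have hnat := ck_zero c hsum' hc0 hcsymm hS
    intro kk
    rcases lt_trichotomy kk 0 with hlt | heq | hgt
    · have h1 : c kk = c (-kk) := by
        have := hcsymm (-kk)
        simpa using this
      rw [h1]
      have h2 : ((-kk).toNat : ℤ) = -kk := Int.toNat_of_nonneg (by omega)
      rw [← h2]
      exact hnat (-kk).toNat (by omega)
    · rw [heq]; exact hc0
    · have h2 : ((kk).toNat : ℤ) = kk := Int.toNat_of_nonneg (by omega)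
      rw [← h2]
      exact hnat kk.toNat (by omega)
  intro s
  have := hrep s
  simp only [hck, zero_mul, tsum_zero] at this
  exact_mod_cast this
end
end
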